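/- Let O_A be an n×n and O_B an m×m complex Hermitian matrix, and let ρ_A, ρ_B be density matrices of sizes n×n and m×m. For every real γ ≠ 0, the quantum tilted loss is additive over tensor products: L_γ(O_A ⊗ I_m + I_n ⊗ O_B, ρ_A ⊗ ρ_B) = L_γ(O_A, ρ_A) + L_γ(O_B, ρ_B), where ⊗ denotes the Kronecker product and I_n, I_m identity matrices. -/

import Mathlib

open Matrix Filter NormedSpace ComplexOrder Kronecker

section aux

/-- `A ↦ A ⊗ₖ 1` as a ring hom. -/
def kronOneRingHom (n m : ℕ) :
    Matrix (Fin n) (Fin n) ℂ →+* Matrix (Fin n × Fin m) (Fin n × Fin m) ℂ where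
  toFun A := A ⊗ₖ (1 : Matrix (Fin m) (Fin m) ℂ)
  map_one' := Matrix.one_kronecker_one
  map_mul' A B := by rw [← Matrix.mul_kronecker_mul, Matrix.one_mul]
  map_zero' := Matrix.zero_kronecker _
  map_add' A B := Matrix.add_kronecker _ _ _

/-- `B ↦ 1 ⊗ₖ B` as a ring hom. -/
def oneKronRingHom (n m : ℕ) :
    Matrix (Fin m) (Fin m) ℂ →+* Matrix (Fin n × Fin m) (Fin n × Fin m) ℂ where
  toFun B := (1 : Matrix (Fin n) (Fin n) ℂ) ⊗ₖ B
  map_one' := Matrix.one_kronecker_one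
  map_mul' A B := by rw [← Matrix.mul_kronecker_mul, Matrix.one_mul]
  map_zero' := Matrix.kronecker_zero _
  map_add' A B := Matrix.kronecker_add _ _ _

lemma exp_kron_one (n m : ℕ) (A : Matrix (Fin n) (Fin n) ℂ) :
    exp (A ⊗ₖ (1 : Matrix (Fin m) (Fin m) ℂ)) = exp A ⊗ₖ (1 : Matrix (Fin m) (Fin m) ℂ) := by
  letI : NormedRing (Matrix (Fin n) (Fin n) ℂ) := Matrix.linftyOpNormedRing
  letI : NormedAlgebra ℂ (Matrix (Fin n) (Fin n) ℂ) := Matrix.linftyOpNormedAlgebra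
  letI : NormedRing (Matrix (Fin n × Fin m) (Fin n × Fin m) ℂ) := Matrix.linftyOpNormedRing
  letI : NormedAlgebra ℂ (Matrix (Fin n × Fin m) (Fin n × Fin m) ℂ) :=
    Matrix.linftyOpNormedAlgebra
  letI : NormedAlgebra ℚ (Matrix (Fin n) (Fin n) ℂ) := Matrix.linftyOpNormedAlgebra
  letI : NormedAlgebra ℚ (Matrix (Fin n × Fin m) (Fin n × Fin m) ℂ) :=
    Matrix.linftyOpNormedAlgebra
  have hc : Continuous (kronOneRingHom n m) := by
    apply continuous_matrix
    intro i j
    show Continuous fun A : Matrix (Fin n) (Fin n) ℂ =>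
      A i.1 j.1 * (1 : Matrix (Fin m) (Fin m) ℂ) i.2 j.2
    exact (continuous_id.matrix_elem i.1 j.1).mul continuous_const
  exact (map_exp (kronOneRingHom n m) hc A).symm

lemma exp_one_kron (n m : ℕ) (B : Matrix (Fin m) (Fin m) ℂ) :
    exp ((1 : Matrix (Fin n) (Fin n) ℂ) ⊗ₖ B) = (1 : Matrix (Fin n) (Fin n) ℂ) ⊗ₖ exp B := by
  letI : NormedRing (Matrix (Fin m) (Fin m) ℂ) := Matrix.linftyOpNormedRing
  letI : NormedAlgebra ℂ (Matrix (Fin m) (Fin m) ℂ) := Matrix.linftyOpNormedAlgebra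
  letI : NormedRing (Matrix (Fin n × Fin m) (Fin n × Fin m) ℂ) := Matrix.linftyOpNormedRing
  letI : NormedAlgebra ℂ (Matrix (Fin n × Fin m) (Fin n × Fin m) ℂ) :=
    Matrix.linftyOpNormedAlgebra
  letI : NormedAlgebra ℚ (Matrix (Fin m) (Fin m) ℂ) := Matrix.linftyOpNormedAlgebra
  letI : NormedAlgebra ℚ (Matrix (Fin n × Fin m) (Fin n × Fin m) ℂ) :=
    Matrix.linftyOpNormedAlgebra
  have hc : Continuous (oneKronRingHom n m) := by
    apply continuous_matrix
    intro i j
    show Continuous fun B : Matrix (Fin m) (Fin m) ℂ =>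
      (1 : Matrix (Fin n) (Fin n) ℂ) i.1 j.1 * B i.2 j.2
    exact continuous_const.mul (continuous_id.matrix_elem i.2 j.2)
  exact (map_exp (oneKronRingHom n m) hc B).symm

/-- The tilted partition function is a positive real. -/
lemma qtl_trace_pos {k : ℕ} (O ρ : Matrix (Fin k) (Fin k) ℂ) (hO : O.IsHermitian)
    (hρ : ρ.PosSemidef) (htr : ρ.trace = 1) (γ : ℝ) :
    ∃ r : ℝ, 0 < r ∧ (exp (γ • O) * ρ).trace = (r : ℂ) := by
  have hH : ((γ / 2 : ℝ) • O).IsHermitian := by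
    unfold Matrix.IsHermitian
    ext i j
    simp [Matrix.conjTranspose_apply, hO.apply i j]
  set C := exp ((γ / 2 : ℝ) • O) with hCdef
  have hC : C.IsHermitian := hH.exp
  have hE : exp (γ • O) = C * C := by
    rw [hCdef, ← Matrix.exp_add_of_commute _ _ (Commute.refl _), ← add_smul]
    norm_num
  obtain ⟨D, hD, hDD⟩ : ∃ D : Matrix (Fin k) (Fin k) ℂ, D.IsHermitian ∧ D * D = ρ := by
    open scoped MatrixOrder in
    exact ⟨CFC.sqrt ρ, (CFC.sqrt_nonneg ρ).isSelfAdjoint, CFC.sqrt_mul_sqrt_self ρ hρ.nonneg⟩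
  set A := D * Cᴴ with hAdef
  have htrace : (exp (γ • O) * ρ).trace = (Aᴴ * A).trace := by
    have h1 : Aᴴ * A = C * ρ * Cᴴ := by
      rw [hAdef, Matrix.conjTranspose_mul, hD.eq, Matrix.conjTranspose_conjTranspose]
      rw [Matrix.mul_assoc, ← Matrix.mul_assoc D D Cᴴ, hDD]
      rw [← Matrix.mul_assoc]
    rw [h1, Matrix.trace_mul_cycle, hE, hC.eq, Matrix.mul_assoc]
  refine ⟨∑ i, ∑ j, Complex.normSq (A j i), ?_, ?_⟩
  · have hnn : ∀ i ∈ (Finset.univ : Finset (Fin k)), 0 ≤ ∑ j, Complex.normSq (A j i) :=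
      fun i _ => Finset.sum_nonneg fun j _ => Complex.normSq_nonneg _
    rcases (Finset.sum_nonneg hnn).lt_or_eq with h | h
    · exact h
    · exfalso
      have hA0 : A = 0 := by
        ext i j
        have h1 := (Finset.sum_eq_zero_iff_of_nonneg hnn).mp h.symm j (Finset.mem_univ _)
        have h2 := (Finset.sum_eq_zero_iff_of_nonneg
          (fun j' _ => Complex.normSq_nonneg (A j' j))).mp h1 i (Finset.mem_univ _)
        simpa using Complex.normSq_eq_zero.mp h2
      have hCinv : Cᴴ * exp (-((γ / 2 : ℝ) • O)) = 1 := by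
        rw [hC.eq, hCdef, ← Matrix.exp_add_of_commute ((γ / 2 : ℝ) • O) _ (Commute.refl _).neg_right]
        simp
      have hD0 : D = 0 := by
        calc D = D * (Cᴴ * exp (-((γ / 2 : ℝ) • O))) := by rw [hCinv, Matrix.mul_one]
          _ = A * exp (-((γ / 2 : ℝ) • O)) := by rw [hAdef, Matrix.mul_assoc]
          _ = 0 := by rw [hA0, Matrix.zero_mul]
      have : ρ.trace = 0 := by rw [← hDD, hD0, Matrix.mul_zero, Matrix.trace_zero]
      rw [htr] at this
      exact one_ne_zero this
  · rw [htrace]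
    simp only [Matrix.trace, Matrix.diag, Matrix.mul_apply, Matrix.conjTranspose_apply]
    push_cast
    refine Finset.sum_congr rfl fun i _ => Finset.sum_congr rfl fun j _ => ?_
    exact Complex.normSq_eq_conj_mul_self.symm

end aux


/-- **Additivity of the quantum tilted loss over tensor products.** For Hermitian observables
`O_A`, `O_B` and density matrices `ρ_A`, `ρ_B`, and any real `γ ≠ 0`,
`L_γ(O_A ⊗ I + I ⊗ O_B, ρ_A ⊗ ρ_B) = L_γ(O_A, ρ_A) + L_γ(O_B, ρ_B)`. -/
theorem qtl_additive_tensor (n m : ℕ)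
    (OA ρA : Matrix (Fin n) (Fin n) ℂ) (OB ρB : Matrix (Fin m) (Fin m) ℂ)
    (hOA : OA.IsHermitian) (hOB : OB.IsHermitian)
    (hρA : ρA.PosSemidef) (hρAtr : ρA.trace = 1)
    (hρB : ρB.PosSemidef) (hρBtr : ρB.trace = 1)
    (γ : ℝ) (hγ : γ ≠ 0) :
    (1 / γ) * Real.log
        ((exp (γ • (OA ⊗ₖ (1 : Matrix (Fin m) (Fin m) ℂ)
              + (1 : Matrix (Fin n) (Fin n) ℂ) ⊗ₖ OB)) * (ρA ⊗ₖ ρB)).trace.re)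
      = (1 / γ) * Real.log ((exp (γ • OA) * ρA).trace.re)
        + (1 / γ) * Real.log ((exp (γ • OB) * ρB).trace.re) := by
  obtain ⟨rA, hrA, htA⟩ := qtl_trace_pos OA ρA hOA hρA hρAtr γ
  obtain ⟨rB, hrB, htB⟩ := qtl_trace_pos OB ρB hOB hρB hρBtr γ
  have hexp : exp (γ • (OA ⊗ₖ (1 : Matrix (Fin m) (Fin m) ℂ)
        + (1 : Matrix (Fin n) (Fin n) ℂ) ⊗ₖ OB))
      = exp (γ • OA) ⊗ₖ exp (γ • OB) := by
    have h1 : γ • (OA ⊗ₖ (1 : Matrix (Fin m) (Fin m) ℂ)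
          + (1 : Matrix (Fin n) (Fin n) ℂ) ⊗ₖ OB)
        = (γ • OA) ⊗ₖ (1 : Matrix (Fin m) (Fin m) ℂ)
          + (1 : Matrix (Fin n) (Fin n) ℂ) ⊗ₖ (γ • OB) := by
      rw [smul_add, Matrix.smul_kronecker, Matrix.kronecker_smul]
    have hcomm : Commute ((γ • OA) ⊗ₖ (1 : Matrix (Fin m) (Fin m) ℂ))
        ((1 : Matrix (Fin n) (Fin n) ℂ) ⊗ₖ (γ • OB)) := by
      unfold Commute SemiconjBy
      rw [← Matrix.mul_kronecker_mul, ← Matrix.mul_kronecker_mul,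
        Matrix.one_mul, Matrix.mul_one, Matrix.one_mul, Matrix.mul_one]
    rw [h1, Matrix.exp_add_of_commute _ _ hcomm, exp_kron_one, exp_one_kron,
      ← Matrix.mul_kronecker_mul, Matrix.one_mul, Matrix.mul_one]
  have htr : (exp (γ • (OA ⊗ₖ (1 : Matrix (Fin m) (Fin m) ℂ)
        + (1 : Matrix (Fin n) (Fin n) ℂ) ⊗ₖ OB)) * (ρA ⊗ₖ ρB)).trace
      = ((rA * rB : ℝ) : ℂ) := by
    rw [hexp, ← Matrix.mul_kronecker_mul, Matrix.trace_kronecker, htA, htB]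
    push_cast
    ring
  rw [htr, htA, htB]
  simp only [Complex.ofReal_re]
  rw [Real.log_mul (ne_of_gt hrA) (ne_of_gt hrB), mul_add]
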